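/- Let Ω be a nonempty finite type and let E = ⟨𝓔, mod⟩ be an epistemic space over Ω. Then AGM revision is realizable in E if and only if there exists a linear revision operator for E. -/
import Mathlib


open Set

/-- `minSet r S` is the set of `r`-minimal elements of `S`:
`min(S, r) = {ω ∈ S : r ω ω' for all ω' ∈ S}`. -/
def minSet {Ω : Type*} (r : Ω → Ω → Prop) (S : Set Ω) : Set Ω :=
  {ω ∈ S | ∀ ω' ∈ S, r ω ω'}

/-- A linear order as a relation: total, antisymmetric and transitive. -/
def IsLinRel {Ω : Type*} (r : Ω → Ω → Prop) : Prop :=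
  (∀ a b, r a b ∨ r b a) ∧ (∀ a b, r a b → r b a → a = b) ∧
    (∀ a b c, r a b → r b c → r a c)

/-- AGM contraction operator for the epistemic space `⟨E, md⟩` (postulates C1–C7,
formulated on model sets). -/
def IsContraction {Ω E : Type*} (md : E → Set Ω) (c : E → Set Ω → E) : Prop :=
  ∀ (Ψ : E) (A B : Set Ω),
    md Ψ ⊆ md (c Ψ A) ∧
    (¬ md Ψ ⊆ A → md (c Ψ A) ⊆ md Ψ) ∧
    (A ≠ Set.univ → ¬ md (c Ψ A) ⊆ A) ∧
    md (c Ψ A) ∩ A ⊆ md Ψ ∧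
    md (c Ψ (A ∩ B)) ⊆ md (c Ψ A) ∪ md (c Ψ B) ∧
    (¬ md (c Ψ (A ∩ B)) ⊆ B → md (c Ψ B) ⊆ md (c Ψ (A ∩ B)))

/-- AGM revision operator for the epistemic space `⟨E, md⟩` (postulates R1–R6,
formulated on model sets). -/
def IsRevision {Ω E : Type*} (md : E → Set Ω) (s : E → Set Ω → E) : Prop :=
  ∀ (Ψ : E) (A B : Set Ω),
    md (s Ψ A) ⊆ A ∧
    (md Ψ ∩ A ≠ ∅ → md (s Ψ A) = md Ψ ∩ A) ∧
    (A ≠ ∅ → md (s Ψ A) ≠ ∅) ∧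
    md (s Ψ A) ∩ B ⊆ md (s Ψ (A ∩ B)) ∧
    (md (s Ψ A) ∩ B ≠ ∅ → md (s Ψ (A ∩ B)) ⊆ md (s Ψ A) ∩ B)

/-- Postulate (ZC). -/
def ZC {Ω E : Type*} (md : E → Set Ω) : Prop :=
  ∀ (Ψ : E) (M : Set Ω), md Ψ ⊆ M → ∃ Ψ' : E, md Ψ' = M

/-- Postulate (ZR1). -/
def ZR1 {Ω E : Type*} (md : E → Set Ω) : Prop :=
  ∀ ω : Ω, ∃ Ψ : E, md Ψ = {ω}

/-- Postulate (ZR2). -/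
def ZR2 {Ω E : Type*} (md : E → Set Ω) : Prop :=
  ∀ (Ψ : E) (M : Set Ω), M ⊆ md Ψ → ∃ Ψ' : E, md Ψ' = M

/-- Postulate (Unbiased). -/
def Unbiased {Ω E : Type*} (md : E → Set Ω) : Prop :=
  ∀ M : Set Ω, ∃ Ψ : E, md Ψ = M

/-- Maxichoice contraction operator. -/
def IsMaxichoiceContraction {Ω E : Type*} (md : E → Set Ω) (c : E → Set Ω → E) : Prop :=
  IsContraction md c ∧
    ∀ Ψ : E, ∃ r : Ω → Ω → Prop, IsLinRel r ∧ ∀ A : Set Ω,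
      (¬ md Ψ ⊆ A → md (c Ψ A) = md Ψ) ∧
      (md Ψ ⊆ A → md (c Ψ A) = md Ψ ∪ minSet r Aᶜ)

/-- Linear contraction operator: a maxichoice contraction operator based on one
single linear order for all epistemic states. -/
def IsLinearContraction {Ω E : Type*} (md : E → Set Ω) (c : E → Set Ω → E) : Prop :=
  IsContraction md c ∧
    ∃ r : Ω → Ω → Prop, IsLinRel r ∧ ∀ (Ψ : E) (A : Set Ω),
      (¬ md Ψ ⊆ A → md (c Ψ A) = md Ψ) ∧
      (md Ψ ⊆ A → md (c Ψ A) = md Ψ ∪ minSet r Aᶜ)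

/-- Full meet contraction operator. -/
def IsFullMeetContraction {Ω E : Type*} (md : E → Set Ω) (c : E → Set Ω → E) : Prop :=
  IsContraction md c ∧
    ∀ (Ψ : E) (A : Set Ω),
      (¬ md Ψ ⊆ A → md (c Ψ A) = md Ψ) ∧
      (md Ψ ⊆ A → md (c Ψ A) = md Ψ ∪ Aᶜ)

/-- Maxichoice revision operator. -/
def IsMaxichoiceRevision {Ω E : Type*} (md : E → Set Ω) (s : E → Set Ω → E) : Prop :=
  IsRevision md s ∧
    ∀ Ψ : E, ∃ r : Ω → Ω → Prop, IsLinRel r ∧ ∀ A : Set Ω,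
      (md Ψ ∩ A ≠ ∅ → md (s Ψ A) = md Ψ ∩ A) ∧
      (md Ψ ∩ A = ∅ → md (s Ψ A) = minSet r A)

/-- Linear revision operator: a maxichoice revision operator based on one single
linear order for all epistemic states. -/
def IsLinearRevision {Ω E : Type*} (md : E → Set Ω) (s : E → Set Ω → E) : Prop :=
  IsRevision md s ∧
    ∃ r : Ω → Ω → Prop, IsLinRel r ∧ ∀ (Ψ : E) (A : Set Ω),
      (md Ψ ∩ A ≠ ∅ → md (s Ψ A) = md Ψ ∩ A) ∧
      (md Ψ ∩ A = ∅ → md (s Ψ A) = minSet r A)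

/-- Full meet revision operator. -/
def IsFullMeetRevision {Ω E : Type*} (md : E → Set Ω) (s : E → Set Ω → E) : Prop :=
  IsRevision md s ∧
    ∀ (Ψ : E) (A : Set Ω),
      (md Ψ ∩ A ≠ ∅ → md (s Ψ A) = md Ψ ∩ A) ∧
      (md Ψ ∩ A = ∅ → md (s Ψ A) = A)


/-- AGM revision is realizable in `⟨E, md⟩` iff there exists a
linear revision operator for `⟨E, md⟩`. -/
theorem revision_realizable_iff_linearRevision {Ω E : Type*} [Fintype Ω] [Nonempty Ω] [Nonempty E]
    (md : E → Set Ω) :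
    (∃ s : E → Set Ω → E, IsRevision md s) ↔
      (∃ s : E → Set Ω → E, IsLinearRevision md s) := by
  classical
  constructor
  · rintro ⟨s, hs⟩
    obtain ⟨Ψ0⟩ := (inferInstance : Nonempty E)
    letI : LinearOrder Ω := LinearOrder.lift' (Fintype.equivFin Ω) (Fintype.equivFin Ω).injective
    set r : Ω → Ω → Prop := fun a b => a ≤ b with hrdef
    have hrlin : IsLinRel r :=
      ⟨fun a b => le_total a b, fun a b => le_antisymm, fun a b c => le_trans⟩
    have hmono : ∀ A B : Set Ω, minSet r A ∩ B ⊆ minSet r (A ∩ B) := by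
      intro A B x hx
      obtain ⟨⟨hxA, hxmin⟩, hxB⟩ := hx
      exact ⟨⟨hxA, hxB⟩, fun b hb => hxmin b hb.1⟩
    have hmin : ∀ A : Set Ω, A.Nonempty → ∃ a ∈ A, minSet r A = {a} := by
      intro A hA
      obtain ⟨a, haA, hamin⟩ := Set.exists_min_image A id (Set.toFinite A) hA
      refine ⟨a, haA, ?_⟩
      ext x
      simp only [minSet, Set.mem_setOf_eq, Set.mem_singleton_iff]
      constructor
      · rintro ⟨hxA, hx⟩
        exact le_antisymm (hx a haA) (hamin x hxA)
      · rintro rfl; exact ⟨haA, fun b hb => hamin b hb⟩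
    have hsingle : ∀ ω : Ω, md (s Ψ0 {ω}) = {ω} := by
      intro ω
      have h1 := (hs Ψ0 {ω} ∅).1
      have h3 := (hs Ψ0 {ω} ∅).2.2.1 (Set.singleton_ne_empty ω)
      rcases Set.subset_singleton_iff_eq.mp h1 with h | h
      · exact absurd h h3
      · exact h
    let m : Set Ω → Ω := fun A =>
      if h : A.Nonempty then (hmin A h).choose else Classical.arbitrary Ω
    have hm : ∀ A (h : A.Nonempty), minSet r A = {m A} := by
      intro A h
      simp only [m, dif_pos h]
      exact (hmin A h).choose_spec.2
    let s' : E → Set Ω → E := fun Ψ A =>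
      if md Ψ ∩ A = ∅ then (if A = ∅ then s Ψ A else s Ψ0 {m A}) else s Ψ A
    have key : ∀ (Ψ : E) (A : Set Ω), (md Ψ ∩ A ≠ ∅ → md (s' Ψ A) = md Ψ ∩ A) ∧
        (md Ψ ∩ A = ∅ → md (s' Ψ A) = minSet r A) := by
      intro Ψ A
      constructor
      · intro hne
        simp only [s', if_neg hne]
        exact (hs Ψ A ∅).2.1 hne
      · intro he
        simp only [s', if_pos he]
        by_cases hA : A = ∅
        · subst hA
          rw [if_pos rfl]
          have h1 : md (s Ψ ∅) = ∅ := Set.subset_empty_iff.mp (hs Ψ ∅ ∅).1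
          rw [h1]
          ext x; simp [minSet]
        · rw [if_neg hA, hsingle, hm A (Set.nonempty_iff_ne_empty.mpr hA)]
    have hrev : IsRevision md s' := by
      intro Ψ A B
      by_cases hA0 : md Ψ ∩ A = ∅
      · have hA : md (s' Ψ A) = minSet r A := (key Ψ A).2 hA0
        have hAB0 : md Ψ ∩ (A ∩ B) = ∅ := by
          rw [← Set.inter_assoc]
          exact Set.subset_empty_iff.mp (le_trans (Set.inter_subset_inter_left B hA0.le) (by simp))
        have hAB : md (s' Ψ (A ∩ B)) = minSet r (A ∩ B) := (key Ψ (A ∩ B)).2 hAB0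
        refine ⟨?_, ?_, ?_, ?_, ?_⟩
        · rw [hA]; exact fun x hx => hx.1
        · intro h; exact absurd hA0 h
        · intro hAne
          rw [hA, hm A (Set.nonempty_iff_ne_empty.mpr hAne)]
          exact Set.singleton_ne_empty _
        · rw [hA, hAB]; exact hmono A B
        · intro hne
          rw [hA, hAB] at *
          obtain ⟨x, hx⟩ := Set.nonempty_iff_ne_empty.mpr hne
          have hxAB : x ∈ minSet r (A ∩ B) := hmono A B hx
          have hABne : (A ∩ B).Nonempty := ⟨x, hxAB.1⟩
          rw [hm (A ∩ B) hABne] at hxAB ⊢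
          rw [Set.mem_singleton_iff] at hxAB
          rw [← hxAB]
          exact Set.singleton_subset_iff.mpr hx
      · have hA : md (s' Ψ A) = md Ψ ∩ A := (key Ψ A).1 hA0
        refine ⟨?_, ?_, ?_, ?_, ?_⟩
        · rw [hA]; exact Set.inter_subset_right
        · intro _; exact hA
        · intro _; rw [hA]; exact hA0
        · by_cases hAB0 : md Ψ ∩ (A ∩ B) = ∅
          · rw [hA, Set.inter_assoc, hAB0]; exact Set.empty_subset _
          · rw [hA, (key Ψ (A ∩ B)).1 hAB0, Set.inter_assoc]
        · intro hne
          rw [hA, Set.inter_assoc] at hne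
          rw [hA, (key Ψ (A ∩ B)).1 hne, Set.inter_assoc]
    exact ⟨s', hrev, r, hrlin, key⟩
  · rintro ⟨s, hlin⟩
    exact ⟨s, hlin.1⟩
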